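/- For every x, y ∈ ℝ^n, ‖(x + y)⁺‖₂² ≤ ‖x⁺‖₂² + 2⟨x⁺, y⟩ + ‖y‖₂². -/

import Mathlib

open RealInnerProductSpace

/-- Componentwise positive part (ReLU) on `ℝ^n`. -/
noncomputable def posPart18 {n : ℕ} (x : EuclideanSpace ℝ (Fin n)) :
    EuclideanSpace ℝ (Fin n) := WithLp.toLp 2 (fun i => max (x i) 0)

lemma norm_sq_eq18 {n : ℕ} (v : EuclideanSpace ℝ (Fin n)) :
    ‖v‖ ^ 2 = ∑ i, v i ^ 2 := by
  rw [EuclideanSpace.norm_eq, Real.sq_sqrt (by positivity)]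
  simp [Real.norm_eq_abs, sq_abs]

/-- Positive invariance and smoothness of `F x = ‖x⁺‖₂²` with `L = 2`:
`‖(x+y)⁺‖₂² ≤ ‖x⁺‖₂² + 2⟪x⁺, y⟫ + ‖y‖₂²`. -/
theorem stmt_18 {n : ℕ} (x y : EuclideanSpace ℝ (Fin n)) :
    ‖posPart18 (x + y)‖ ^ 2
      ≤ ‖posPart18 x‖ ^ 2 + 2 * ⟪posPart18 x, y⟫ + ‖y‖ ^ 2 := by
  have hin : ⟪posPart18 x, y⟫ = ∑ i, posPart18 x i * y i := by
    rw [PiLp.inner_apply]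
    simp [RCLike.inner_apply, mul_comm]
  rw [norm_sq_eq18, norm_sq_eq18, norm_sq_eq18, hin]
  rw [Finset.mul_sum, ← Finset.sum_add_distrib, ← Finset.sum_add_distrib]
  apply Finset.sum_le_sum
  intro i _
  simp only [posPart18, PiLp.add_apply]
  rcases le_or_gt (x i + y i) 0 with h | h
  · rw [max_eq_right h]
    nlinarith [le_max_right (x i) 0, le_max_left (x i) 0, sq_nonneg (max (x i) 0 + y i)]
  · rw [max_eq_left h.le]
    nlinarith [le_max_left (x i) 0]
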